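/- arXiv:1407.2466 — 5 statements merged into one kernel-verified Lean document; each statement's English description precedes it below -/
import Mathlib

section
/- Let (H, ⟨·,·⟩) be an inner product space over 𝕂 (𝕂 = ℝ or ℂ) and e ∈ H with ‖e‖ = 1. If α, β, λ, μ ∈ 𝕂 and x, y ∈ H satisfy Re⟨αe − x, x − βe⟩ ≥ 0 and Re⟨λe − y, y − μe⟩ ≥ 0, then |⟨x, y⟩ − ⟨x, e⟩⟨e, y⟩| ≤ (1/4)|α − β||λ − μ|. -/
open RCLike in
lemma gruss_key {𝕜 H : Type*} [RCLike 𝕜] [NormedAddCommGroup H]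
    [InnerProductSpace 𝕜 H] (e : H) (he : ‖e‖ = 1) (α β : 𝕜) (x : H)
    (h : 0 ≤ RCLike.re (inner (𝕜 := 𝕜) (α • e - x) (x - β • e))) :
    ‖x - (inner 𝕜 e x : 𝕜) • e‖ ≤ ‖α - β‖ / 2 := by
  set c : 𝕜 := inner 𝕜 e x with hc
  have hee : (inner 𝕜 e e : 𝕜) = 1 := by
    rw [inner_self_eq_norm_sq_to_K, he]; simp
  have hxe : (inner 𝕜 x e : 𝕜) = starRingEnd 𝕜 c := by rw [hc, inner_conj_symm]
  have hnormsq : ‖x - c • e‖ ^ 2 = ‖x‖ ^ 2 - ‖c‖ ^ 2 := by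
    rw [@norm_sub_sq 𝕜]
    have h1 : RCLike.re (inner 𝕜 x (c • e) : 𝕜) = ‖c‖ ^ 2 := by
      rw [inner_smul_right, hxe, RCLike.mul_conj]
      norm_cast
    have h2 : ‖c • e‖ = ‖c‖ := by simp [norm_smul, he]
    rw [h1, h2]; ring
  -- expand hypothesis
  have hexp : RCLike.re (inner (𝕜 := 𝕜) (α • e - x) (x - β • e)) =
      RCLike.re ((starRingEnd 𝕜 α) * c) + RCLike.re (β * starRingEnd 𝕜 c)
        - RCLike.re ((starRingEnd 𝕜 α) * β) - ‖x‖ ^ 2 := by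
    rw [inner_sub_left, inner_sub_right, inner_sub_right, inner_smul_left,
      inner_smul_left, inner_smul_right, inner_smul_right, hee, hxe, ← hc,
      inner_self_eq_norm_sq_to_K]
    simp only [mul_one, map_sub, ← RCLike.ofReal_pow, RCLike.ofReal_re]
    ring
  rw [hexp] at h
  have hle : ‖x‖ ^ 2 - ‖c‖ ^ 2 ≤ (‖α - β‖ / 2) ^ 2 := by
    have hab : ‖α - β‖ ^ 2 = (re α - re β) ^ 2 + (im α - im β) ^ 2 := by
      rw [← RCLike.normSq_eq_def', RCLike.normSq_apply]
      simp [map_sub]; ring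
    have hcn : ‖c‖ ^ 2 = re c ^ 2 + im c ^ 2 := by
      rw [← RCLike.normSq_eq_def', RCLike.normSq_apply]; ring
    simp only [RCLike.mul_re, RCLike.conj_re, RCLike.conj_im] at h
    nlinarith [sq_nonneg ((re α + re β) / 2 - re c), sq_nonneg ((im α + im β) / 2 - im c)]
  have h0 : (0:ℝ) ≤ ‖x - c • e‖ := norm_nonneg _
  have h0' : (0:ℝ) ≤ ‖α - β‖ / 2 := by positivity
  nlinarith [hnormsq, hle]

/-- Grüss type inequality in inner 𝕜 product spaces. -/
theorem gruss_inner_product {𝕜 H : Type*} [RCLike 𝕜] [NormedAddCommGroup H]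
    [InnerProductSpace 𝕜 H] (e : H) (he : ‖e‖ = 1) (α β lam μ : 𝕜) (x y : H)
    (h₁ : 0 ≤ RCLike.re (inner (𝕜 := 𝕜) (α • e - x) (x - β • e)))
    (h₂ : 0 ≤ RCLike.re (inner (𝕜 := 𝕜) (lam • e - y) (y - μ • e))) :
    ‖(inner (𝕜 := 𝕜) x y : 𝕜) - (inner (𝕜 := 𝕜) x e : 𝕜) * (inner (𝕜 := 𝕜) e y : 𝕜)‖ ≤ 4⁻¹ * ‖α - β‖ * ‖lam - μ‖ := by
  have hee : (inner 𝕜 e e : 𝕜) = 1 := by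
    rw [inner_self_eq_norm_sq_to_K, he]; simp
  have hxe : (inner 𝕜 x e : 𝕜) = starRingEnd 𝕜 (inner 𝕜 e x : 𝕜) := (inner_conj_symm x e).symm
  have hid : (inner 𝕜 x y : 𝕜) - (inner 𝕜 x e : 𝕜) * (inner 𝕜 e y : 𝕜) =
      inner 𝕜 (x - (inner 𝕜 e x : 𝕜) • e) (y - (inner 𝕜 e y : 𝕜) • e) := by
    rw [inner_sub_left, inner_sub_right, inner_sub_right, inner_smul_left,
      inner_smul_left, inner_smul_right, inner_smul_right, hee, hxe]
    ring
  rw [hid]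
  calc ‖(inner 𝕜 (x - (inner 𝕜 e x : 𝕜) • e) (y - (inner 𝕜 e y : 𝕜) • e) : 𝕜)‖
      ≤ ‖x - (inner 𝕜 e x : 𝕜) • e‖ * ‖y - (inner 𝕜 e y : 𝕜) • e‖ := norm_inner_le_norm _ _
    _ ≤ (‖α - β‖ / 2) * (‖lam - μ‖ / 2) := by
        gcongr
        · exact gruss_key e he α β x h₁
        · exact gruss_key e he lam μ y h₂
    _ = 4⁻¹ * ‖α - β‖ * ‖lam - μ‖ := by ring
end

section
/- Let 𝒜 be a C*-algebra, X a Hilbert 𝒜-module, and μ a probability measure on a measurable space Ω. If f ∈ L₂(Ω, X) and a ∈ X, then ∫_Ω |f(t)|² dμ(t) − |∫_Ω f(t) dμ(t)|² ≤ ∫_Ω |f(t) − a|² dμ(t), where the inequality is in the order of positive elements of 𝒜. -/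
open MeasureTheory
open scoped RightActions

/-- The Dec-2024 Mathlib `CStarModule` (right Hilbert module, `⟪x, y <• a⟫ = ⟪x, y⟫ * a`),
restated since Mathlib's `CStarModule` now uses a left action. -/
class CStarModuleOld (A E : Type*) [NonUnitalSemiring A] [StarRing A] [Module ℂ A]
    [AddCommGroup E] [Module ℂ E] [PartialOrder A] [SMul Aᵐᵒᵖ E] [Norm A] [Norm E]
    extends Inner A E where
  inner_add_right {x} {y} {z} : inner x (y + z) = inner x y + inner x z
  inner_self_nonneg {x} : 0 ≤ inner x x
  inner_self {x} : inner x x = 0 ↔ x = 0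
  inner_op_smul_right {a : A} {x y : E} : inner x (y <• a) = inner x y * a
  inner_smul_right_complex {z : ℂ} {x} {y} : inner x (z • y) = z • inner x y
  star_inner x y : star (inner x y) = inner y x
  norm_eq_sqrt_norm_inner_self x : ‖x‖ = √‖inner x x‖

namespace CStarModuleOld

variable {A : Type*} [NonUnitalCStarAlgebra A] [PartialOrder A] [StarOrderedRing A]
    {X : Type*} [NormedAddCommGroup X] [NormedSpace ℂ X] [SMul Aᵐᵒᵖ X] [CStarModuleOld A X]

lemma inner_add_left' (x y z : X) : inner A (x + y) z = inner A x z + inner A y z := by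
  rw [← star_inner (A := A) z (x + y), inner_add_right, star_add, star_inner, star_inner]

lemma inner_sub_right' (x y z : X) : inner A x (y - z) = inner A x y - inner A x z := by
  have h := inner_add_right (A := A) (x := x) (y := y - z) (z := z)
  rw [sub_add_cancel] at h
  exact eq_sub_of_add_eq h.symm

lemma inner_sub_left' (x y z : X) : inner A (x - y) z = inner A x z - inner A y z := by
  have h := inner_add_left' (A := A) (x - y) y z
  rw [sub_add_cancel] at h
  exact eq_sub_of_add_eq h.symm

lemma inner_smul_left' (c : ℂ) (x y : X) : inner A (c • x) y = star c • inner A x y := by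
  rw [← star_inner (A := A) y (c • x), inner_smul_right_complex, star_smul, star_inner]

lemma inner_zero_left' (y : X) : inner A (0 : X) y = 0 := by
  have h := inner_add_left' (A := A) (0 : X) 0 y
  rw [add_zero] at h
  simpa using h

lemma inner_zero_right' (x : X) : inner A x (0 : X) = 0 := by
  have h := inner_add_right (A := A) (x := x) (y := (0 : X)) (z := 0)
  rw [add_zero] at h
  simpa using h

lemma norm_inner_self' (x : X) : ‖inner A x x‖ = ‖x‖ ^ 2 := by
  rw [norm_eq_sqrt_norm_inner_self (A := A) x, Real.sq_sqrt (norm_nonneg _)]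

lemma polar' (x y : X) : (4 : ℂ) • inner A x y = inner A (x + y) (x + y) - inner A (x - y) (x - y)
    - Complex.I • (inner A (x + Complex.I • y) (x + Complex.I • y)
      - inner A (x - Complex.I • y) (x - Complex.I • y)) := by
  simp only [inner_add_left', inner_add_right, inner_sub_left', inner_sub_right', inner_smul_left',
    inner_smul_right_complex, Complex.star_def, Complex.conj_I, smul_sub, smul_add, smul_smul,
    neg_mul, mul_neg, Complex.I_mul_I, neg_neg, neg_smul, one_smul]
  match_scalars <;> ring_nf <;> simp [Complex.I_sq] <;> ring_nf

lemma norm_inner_le_sq' (x y : X) : ‖inner A x y‖ ≤ (‖x‖ + ‖y‖) ^ 2 := by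
  have hI : ‖Complex.I • y‖ = ‖y‖ := by rw [norm_smul, Complex.norm_I, one_mul]
  have e1 : ‖x + y‖ ≤ ‖x‖ + ‖y‖ := norm_add_le _ _
  have e2 : ‖x - y‖ ≤ ‖x‖ + ‖y‖ := norm_sub_le _ _
  have e3 : ‖x + Complex.I • y‖ ≤ ‖x‖ + ‖y‖ := (norm_add_le _ _).trans (by rw [hI])
  have e4 : ‖x - Complex.I • y‖ ≤ ‖x‖ + ‖y‖ := (norm_sub_le _ _).trans (by rw [hI])
  have t : ‖(4 : ℂ) • inner A x y‖ ≤ ‖inner A (x + y) (x + y)‖ + ‖inner A (x - y) (x - y)‖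
      + (‖inner A (x + Complex.I • y) (x + Complex.I • y)‖
        + ‖inner A (x - Complex.I • y) (x - Complex.I • y)‖) := by
    rw [polar']
    refine (norm_sub_le _ _).trans (add_le_add (norm_sub_le _ _) ?_)
    rw [norm_smul, Complex.norm_I, one_mul]
    exact norm_sub_le _ _
  rw [norm_smul, norm_inner_self', norm_inner_self', norm_inner_self', norm_inner_self'] at t
  have h4 : ‖(4 : ℂ)‖ = 4 := by norm_num
  rw [h4] at t
  have f1 := pow_le_pow_left₀ (norm_nonneg _) e1 2
  have f2 := pow_le_pow_left₀ (norm_nonneg _) e2 2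
  have f3 := pow_le_pow_left₀ (norm_nonneg _) e3 2
  have f4 := pow_le_pow_left₀ (norm_nonneg _) e4 2
  linarith

lemma norm_inner_le' (x y : X) : ‖inner A x y‖ ≤ 4 * (‖x‖ * ‖y‖) := by
  by_cases hx : x = 0
  · subst hx; rw [inner_zero_left']; simp
  by_cases hy : y = 0
  · subst hy; rw [inner_zero_right']; simp
  have hxp : 0 < ‖x‖ := norm_pos_iff.mpr hx
  have hyp : 0 < ‖y‖ := norm_pos_iff.mpr hy
  have hu : ‖((‖x‖⁻¹ : ℝ) : ℂ) • x‖ = 1 := by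
    rw [norm_smul, Complex.norm_real, Real.norm_eq_abs, abs_of_nonneg (by positivity),
      inv_mul_cancel₀ hxp.ne']
  have hv : ‖((‖y‖⁻¹ : ℝ) : ℂ) • y‖ = 1 := by
    rw [norm_smul, Complex.norm_real, Real.norm_eq_abs, abs_of_nonneg (by positivity),
      inv_mul_cancel₀ hyp.ne']
  have h := norm_inner_le_sq' (A := A) (((‖x‖⁻¹ : ℝ) : ℂ) • x) (((‖y‖⁻¹ : ℝ) : ℂ) • y)
  rw [hu, hv, inner_smul_left', inner_smul_right_complex, Complex.star_def, Complex.conj_ofReal,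
    norm_smul, norm_smul, Complex.norm_real, Complex.norm_real, Real.norm_eq_abs,
    Real.norm_eq_abs, abs_of_nonneg (by positivity), abs_of_nonneg (by positivity)] at h
  have e : ‖inner A x y‖ = ‖x‖ * (‖y‖ * (‖x‖⁻¹ * (‖y‖⁻¹ * ‖inner A x y‖))) := by
    field_simp
  rw [e]
  have : ‖x‖ * (‖y‖ * (‖x‖⁻¹ * (‖y‖⁻¹ * ‖inner A x y‖))) ≤ ‖x‖ * (‖y‖ * 4) := by
    gcongr
    linarith
  linarith

/-- The continuous linear map `y ↦ ⟪x, y⟫`. -/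
noncomputable def innerL' (x : X) : X →L[ℂ] A :=
  LinearMap.mkContinuous
    { toFun := fun y => inner A x y
      map_add' := fun _ _ => inner_add_right
      map_smul' := fun _ _ => inner_smul_right_complex }
    (4 * ‖x‖) (fun y => by
      show ‖inner A x y‖ ≤ 4 * ‖x‖ * ‖y‖
      rw [mul_assoc]
      exact norm_inner_le' x y)

lemma innerL'_apply (x y : X) : innerL' (A := A) x y = inner A x y := rfl

lemma continuous_innerL' : Continuous (fun x : X => innerL' (A := A) x) := by
  refine (LipschitzWith.of_dist_le_mul (K := 4) fun x y => ?_).continuous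
  rw [dist_eq_norm, dist_eq_norm]
  push_cast
  refine ContinuousLinearMap.opNorm_le_bound _ (by positivity) fun z => ?_
  rw [ContinuousLinearMap.sub_apply, innerL'_apply, innerL'_apply, ← inner_sub_left', mul_assoc]
  exact norm_inner_le' _ _

lemma continuous_inner_self' : Continuous (fun x : X => inner A x x) := by
  have := (continuous_innerL' (A := A) (X := X)).clm_apply continuous_id
  exact this

end CStarModuleOld

/-- For a Hilbert C*-module valued function `f` and any `a ∈ X`,
`∫ |f|² dμ − |∫ f dμ|² ≤ ∫ |f − a|² dμ` in the order of the C*-algebra `A`. -/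
theorem gruss_self_functional_le {A : Type*} [NonUnitalCStarAlgebra A]
    [PartialOrder A] [StarOrderedRing A]
    {X : Type*} [NormedAddCommGroup X] [NormedSpace ℂ X] [SMul Aᵐᵒᵖ X] [CStarModuleOld A X]
    [CompleteSpace X]
    {Ω : Type*} [MeasurableSpace Ω] (μ : Measure Ω) [IsProbabilityMeasure μ]
    (f : Ω → X) (hf : MemLp f 2 μ) (a : X) :
    (∫ t, (inner A (f t) (f t) : A) ∂μ) - (inner A (∫ t, f t ∂μ) (∫ t, f t ∂μ) : A) ≤
      ∫ t, (inner A (f t - a) (f t - a) : A) ∂μ := by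
  set m : X := ∫ t, f t ∂μ with hm
  have hf1 : Integrable f μ := hf.integrable one_le_two
  have hff : Integrable (fun t => (inner A (f t) (f t) : A)) μ := by
    have hsq : Integrable (fun t => ‖f t‖ ^ 2) μ := hf.integrable_norm_pow two_ne_zero
    exact hsq.mono' (CStarModuleOld.continuous_inner_self'.comp_aestronglyMeasurable hf.1)
      (Filter.Eventually.of_forall fun t => (CStarModuleOld.norm_inner_self' _).le)
  have haf : Integrable (fun t => (inner A a (f t) : A)) μ :=
    (CStarModuleOld.innerL' (A := A) a).integrable_comp hf1
  have hfa : Integrable (fun t => (inner A (f t) a : A)) μ := by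
    have h := (((starL' ℝ : A ≃L[ℝ] A) : A →L[ℝ] A)).integrable_comp haf
    simpa [CStarModuleOld.star_inner] using h
  have haf' : ∫ t, (inner A a (f t) : A) ∂μ = (inner A a m : A) :=
    ((CStarModuleOld.innerL' (A := A) a).integral_comp_comm hf1)
  have hfa' : ∫ t, (inner A (f t) a : A) ∂μ = (inner A m a : A) := by
    have hstar := (((starL' ℝ : A ≃L[ℝ] A) : A →L[ℝ] A)).integral_comp_comm haf
    simp only [ContinuousLinearEquiv.coe_coe, starL'_apply] at hstar
    simpa [CStarModuleOld.star_inner, haf'] using hstar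
  have key : ∫ t, (inner A (f t - a) (f t - a) : A) ∂μ
      = (∫ t, (inner A (f t) (f t) : A) ∂μ) - (inner A m a : A) - (inner A a m : A)
        + (inner A a a : A) := by
    have hint : ∀ t, (inner A (f t - a) (f t - a) : A)
        = (inner A (f t) (f t) : A) - (inner A (f t) a : A) - (inner A a (f t) : A)
          + (inner A a a : A) := fun t => by
      simp [CStarModuleOld.inner_sub_left', CStarModuleOld.inner_sub_right']
      abel
    rw [show (fun t => (inner A (f t - a) (f t - a) : A)) = fun t =>
        (inner A (f t) (f t) : A) - (inner A (f t) a : A) - (inner A a (f t) : A)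
          + (inner A a a : A) from funext hint]
    have i1 : Integrable (fun t => (inner A (f t) (f t) : A) - (inner A (f t) a : A)) μ :=
      hff.sub hfa
    have i2 : Integrable (fun t =>
        (inner A (f t) (f t) : A) - (inner A (f t) a : A) - (inner A a (f t) : A)) μ := i1.sub haf
    rw [integral_add i2 (integrable_const _), integral_sub i1 haf, integral_sub hff hfa,
      hfa', haf', integral_const]
    simp
  have hpos : (0 : A) ≤ (inner A (m - a) (m - a) : A) := CStarModuleOld.inner_self_nonneg
  have hexp : (inner A (m - a) (m - a) : A)
      = (inner A m m : A) - (inner A m a : A) - (inner A a m : A) + (inner A a a : A) := by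
    simp [CStarModuleOld.inner_sub_left', CStarModuleOld.inner_sub_right']
    abel
  have : (∫ t, (inner A (f t) (f t) : A) ∂μ) - (inner A m m : A)
      + (inner A (m - a) (m - a) : A) = ∫ t, (inner A (f t - a) (f t - a) : A) ∂μ := by
    rw [key, hexp]; abel
  calc (∫ t, (inner A (f t) (f t) : A) ∂μ) - (inner A m m : A)
      ≤ (∫ t, (inner A (f t) (f t) : A) ∂μ) - (inner A m m : A)
        + (inner A (m - a) (m - a) : A) := le_add_of_nonneg_right hpos
    _ = _ := this
end

section
/- Let 𝒜 be a C*-algebra, X a Hilbert 𝒜-module, and μ a probability measure on a measurable space Ω. For every f ∈ L₂(Ω, X), the element ∫_Ω |f(t)|² dμ(t) − |∫_Ω f(t) dμ(t)|² is a positive element of 𝒜. -/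
open MeasureTheory
open scoped RightActions

/-- The Hilbert C*-module class as Mathlib (Dec 2024) defined `CStarModule`: a *right* module
(action of `Aᵐᵒᵖ`) with `⟪x, y <• a⟫ = ⟪x, y⟫ * a`. Mathlib's current `CStarModule` uses a
left action with another axiom, so the old notion is restated here. -/
class RightCStarModule (A : outParam <| Type*) (E : Type*) [NonUnitalSemiring A] [StarRing A]
    [Module ℂ A] [AddCommGroup E] [Module ℂ E] [PartialOrder A] [SMul Aᵐᵒᵖ E] [Norm A] [Norm E]
    extends Inner A E where
  inner_add_right {x} {y} {z} : inner x (y + z) = inner x y + inner x z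
  inner_self_nonneg {x} : 0 ≤ inner x x
  inner_self {x} : inner x x = 0 ↔ x = 0
  inner_op_smul_right {a : A} {x y : E} : inner x (y <• a) = inner x y * a
  inner_smul_right_complex {z : ℂ} {x} {y} : inner x (z • y) = z • inner x y
  star_inner x y : star (inner x y) = inner y x
  norm_eq_sqrt_norm_inner_self x : ‖x‖ = √‖inner x x‖

namespace RightCStarModule

section general

variable {A E : Type*} [NonUnitalCStarAlgebra A] [PartialOrder A] [StarOrderedRing A]
  [NormedAddCommGroup E] [NormedSpace ℂ E] [SMul Aᵐᵒᵖ E] [RightCStarModule A E]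

lemma inner_add_leftR {x y z : E} : inner A (x + y) z = inner A x z + inner A y z := by
  rw [← star_inner z (x + y), inner_add_right, star_add, star_inner, star_inner]

lemma inner_op_smul_leftR {b : A} {x y : E} : inner A (x <• b) y = star b * inner A x y := by
  rw [← star_inner y, inner_op_smul_right, star_mul, star_inner]

lemma inner_smul_left_complexR {z : ℂ} {x y : E} : inner A (z • x) y = star z • inner A x y := by
  rw [← star_inner y, inner_smul_right_complex, star_smul, star_inner]

lemma inner_smul_right_realR {z : ℝ} {x y : E} : inner A x (z • y) = z • inner A x y := by
  have h₁ : z • y = (z : ℂ) • y := by simp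
  rw [h₁, inner_smul_right_complex]
  simp

lemma inner_smul_left_realR {z : ℝ} {x y : E} : inner A (z • x) y = z • inner A x y := by
  have h₁ : z • x = (z : ℂ) • x := by simp
  rw [h₁, inner_smul_left_complexR]
  simp

/-- The inner product as a sesquilinear map. -/
noncomputable def innerLinR : E →ₗ⋆[ℂ] E →ₗ[ℂ] A where
  toFun x := { toFun := fun y => inner A x y
               map_add' := fun z y => inner_add_right
               map_smul' := fun z y => inner_smul_right_complex }
  map_add' z y := by ext; simp [inner_add_leftR]
  map_smul' z y := by ext; simp [inner_smul_left_complexR]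

lemma inner_zero_rightR {x : E} : inner A x 0 = 0 := (innerLinR x).map_zero
lemma inner_zero_leftR {x : E} : inner A 0 x = 0 := by
  have := (innerLinR (A := A) (E := E)).map_zero
  exact congrArg (fun g => g x) this

lemma inner_sub_rightR {x y z : E} : inner A x (y - z) = inner A x y - inner A x z :=
  (innerLinR x).map_sub y z
lemma inner_sub_leftR {x y z : E} : inner A (x - y) z = inner A x z - inner A y z := by
  have := (innerLinR (A := A) (E := E)).map_sub x y
  exact congrArg (fun g => g z) this

lemma norm_sq_eqR {x : E} : ‖x‖ ^ 2 = ‖inner A x x‖ := by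
  rw [norm_eq_sqrt_norm_inner_self (A := A) x, Real.sq_sqrt (norm_nonneg _)]

lemma inner_swap_mul_inner_leR {x y : E} :
    inner A y x * inner A x y ≤ ‖x‖ ^ 2 • inner A y y := by
  rcases eq_or_ne x 0 with h | h
  · simp [h, inner_zero_leftR, inner_zero_rightR]
  · have hx : 0 < ‖x‖ := norm_pos_iff.mpr h
    have h₁ : ∀ b : A, (0:A) ≤ ‖x‖ ^ 2 • (star b * b) - ‖x‖ ^ 2 • (star b * inner A x y)
        - ‖x‖ ^ 2 • (inner A y x * b) + ‖x‖ ^ 2 • (‖x‖ ^ 2 • inner A y y) := fun b => by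
      calc (0:A) ≤ inner A (x <• b - ‖x‖ ^ 2 • y) (x <• b - ‖x‖ ^ 2 • y) := inner_self_nonneg
        _ = star b * inner A x x * b - ‖x‖ ^ 2 • (star b * inner A x y)
              - ‖x‖ ^ 2 • (inner A y x * b) + ‖x‖ ^ 2 • (‖x‖ ^ 2 • inner A y y) := by
          simp only [inner_sub_rightR, inner_op_smul_right, inner_sub_leftR, inner_op_smul_leftR,
            inner_smul_left_realR, inner_smul_right_realR, smul_mul_assoc, mul_smul_comm,
            smul_sub, mul_sub, sub_mul, mul_assoc]
          abel
        _ ≤ _ := by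
          gcongr
          calc _ ≤ ‖inner A x x‖ • (star b * b) := CStarAlgebra.star_left_conjugate_le_norm_smul (hb := star_inner x x)
            _ = ‖x‖ ^ 2 • (star b * b) := by rw [norm_sq_eqR]
    specialize h₁ (inner A x y)
    simp only [star_inner, sub_self, zero_sub, le_neg_add_iff_add_le, add_zero] at h₁
    rwa [smul_le_smul_iff_of_pos_left (pow_pos hx _)] at h₁

lemma norm_inner_leR {x y : E} : ‖inner A x y‖ ≤ ‖x‖ * ‖y‖ := by
  have := calc ‖inner A x y‖ ^ 2 = ‖inner A y x * inner A x y‖ := by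
                rw [← star_inner x y, CStarRing.norm_star_mul_self, pow_two]
    _ ≤ ‖‖x‖ ^ 2 • inner A y y‖ := by
                refine CStarAlgebra.norm_le_norm_of_nonneg_of_le ?_ inner_swap_mul_inner_leR
                rw [← star_inner x y]
                exact star_mul_self_nonneg _
    _ = ‖x‖ ^ 2 * ‖inner A y y‖ := by simp [norm_smul]
    _ = ‖x‖ ^ 2 * ‖y‖ ^ 2 := by rw [norm_sq_eqR (A := A) (x := y)]
    _ = (‖x‖ * ‖y‖) ^ 2 := by ring
  exact (pow_le_pow_iff_left₀ (norm_nonneg _) (by positivity) (by norm_num)).mp this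

/-- The inner product as a continuous sesquilinear map. -/
noncomputable def innerSLR : E →L⋆[ℂ] E →L[ℂ] A :=
  LinearMap.mkContinuous₂ (innerLinR : E →ₗ⋆[ℂ] E →ₗ[ℂ] A) 1 <| fun x y => by
    simpa [innerLinR] using (norm_inner_leR (A := A) (x := x) (y := y))

lemma continuous_innerR : Continuous (fun x : E × E => inner A x.1 x.2) := by
  have : (fun x : E × E => inner A x.1 x.2) = fun x => innerSLR (A := A) x.1 x.2 := rfl
  rw [this]
  fun_prop

end general

end RightCStarModule

/-- For every `f ∈ L₂(Ω, X)`, the element `∫ |f|² dμ − |∫ f dμ|²` is a positive element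
of the C*-algebra `A`. -/
theorem gruss_self_functional_nonneg {A : Type*} [NonUnitalCStarAlgebra A]
    [PartialOrder A] [StarOrderedRing A]
    {X : Type*} [NormedAddCommGroup X] [NormedSpace ℂ X] [SMul Aᵐᵒᵖ X] [RightCStarModule A X]
    [CompleteSpace X]
    {Ω : Type*} [MeasurableSpace Ω] (μ : Measure Ω) [IsProbabilityMeasure μ]
    (f : Ω → X) (hf : MemLp f 2 μ) :
    0 ≤ (∫ t, (inner A (f t) (f t) : A) ∂μ) - (inner A (∫ t, f t ∂μ) (∫ t, f t ∂μ) : A) := by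
  have hf1 : Integrable f μ := hf.integrable one_le_two
  set m : X := ∫ t, f t ∂μ with hm
  -- integrability of t ↦ ⟪f t, f t⟫
  have hmeas : AEStronglyMeasurable (fun t => (inner A (f t) (f t) : A)) μ :=
    (RightCStarModule.continuous_innerR (A := A) (E := X)).comp_aestronglyMeasurable
      (hf.aestronglyMeasurable.prodMk hf.aestronglyMeasurable)
  have hbound : Integrable (fun t => ‖f t‖ ^ (2 : ℝ)) μ := by
    have := hf.norm_rpow (by norm_num) (by norm_num)
    simpa [ENNReal.toReal_ofNat] using memLp_one_iff_integrable.mp this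
  have hff : Integrable (fun t => (inner A (f t) (f t) : A)) μ := by
    refine Integrable.mono' hbound hmeas (Filter.Eventually.of_forall fun t => ?_)
    rw [← RightCStarModule.norm_sq_eqR]
    rw [Real.rpow_two]
  -- integrability of t ↦ ⟪m, f t⟫ and its integral
  have hmf : Integrable (fun t => (inner A m (f t) : A)) μ :=
    (RightCStarModule.innerSLR (A := A) m).integrable_comp hf1
  have hmf_int : (∫ t, (inner A m (f t) : A) ∂μ) = inner A m m :=
    (RightCStarModule.innerSLR (A := A) m).integral_comp_comm hf1
  -- star versions
  have hstar : ∀ t, (inner A (f t) m : A) = star (inner A m (f t) : A) := fun t =>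
    (RightCStarModule.star_inner _ _).symm
  have hfm : Integrable (fun t => (inner A (f t) m : A)) μ := by
    simp only [hstar]
    exact ((starL' ℝ : A ≃L[ℝ] A).toContinuousLinearMap).integrable_comp hmf
  have hfm_int : (∫ t, (inner A (f t) m : A) ∂μ) = inner A m m := by
    have h := (starL' ℝ : A ≃L[ℝ] A).integral_comp_comm (μ := μ)
      (fun t => (inner A m (f t) : A))
    simp only [hstar]
    have h' : (∫ t, star (inner A m (f t) : A) ∂μ)
        = (starL' ℝ : A ≃L[ℝ] A) (∫ t, (inner A m (f t) : A) ∂μ) := h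
    rw [h', hmf_int]
    exact RightCStarModule.star_inner m m
  -- expansion of ⟪f t - m, f t - m⟫
  have key : ∀ t, (inner A (f t - m) (f t - m) : A)
      = inner A (f t) (f t) - inner A (f t) m - inner A m (f t) + inner A m m := by
    intro t
    simp only [RightCStarModule.inner_sub_leftR, RightCStarModule.inner_sub_rightR]
    abel
  have hgg : Integrable (fun t => (inner A (f t - m) (f t - m) : A)) μ := by
    simp only [key]
    exact ((hff.sub hfm).sub hmf).add (integrable_const _)
  -- the integral of a.e. nonnegative function is nonneg (positive cone is closed & convex)
  have hconv : Convex ℝ {a : A | 0 ≤ a} := by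
    intro a ha b hb p q hp hq _
    exact add_nonneg (smul_nonneg hp ha) (smul_nonneg hq hb)
  have h0 : (0 : A) ≤ ∫ t, (inner A (f t - m) (f t - m) : A) ∂μ := by
    have := hconv.integral_mem CStarAlgebra.isClosed_nonneg
      (Filter.Eventually.of_forall fun t => (RightCStarModule.inner_self_nonneg : (0:A) ≤ _)) hgg
    exact this
  -- compute the integral
  have hcalc : (∫ t, (inner A (f t - m) (f t - m) : A) ∂μ)
      = (∫ t, (inner A (f t) (f t) : A) ∂μ) - inner A m m := by
    calc (∫ t, (inner A (f t - m) (f t - m) : A) ∂μ)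
        = ∫ t, ((inner A (f t) (f t) : A) - inner A (f t) m - inner A m (f t) + inner A m m) ∂μ := by
          simp only [key]
      _ = (∫ t, (inner A (f t) (f t) : A) ∂μ) - (∫ t, (inner A (f t) m : A) ∂μ)
            - (∫ t, (inner A m (f t) : A) ∂μ) + (inner A m m : A) := by
          have h1 : Integrable (fun t => (inner A (f t) (f t) : A) - inner A (f t) m) μ :=
            hff.sub hfm
          have h2 : Integrable
              (fun t => (inner A (f t) (f t) : A) - inner A (f t) m - inner A m (f t)) μ :=
            h1.sub hmf
          rw [integral_add h2 (integrable_const _), integral_sub h1 hmf,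
            integral_sub hff hfm, integral_const]
          simp
      _ = (∫ t, (inner A (f t) (f t) : A) ∂μ) - inner A m m := by
          rw [hfm_int, hmf_int]; abel
  rw [← hcalc]
  exact h0
end

section
/- Let 𝒜 be a C*-algebra, X a Hilbert 𝒜-module, and μ a probability measure on a measurable space Ω. If f ∈ L₂(Ω, X) and x, x' ∈ X satisfy ∫_Ω Re⟨x' − f(t), f(t) − x⟩ dμ(t) ≥ 0, then in the order of 𝒜: ∫_Ω |f(t)|² dμ(t) − |∫_Ω f(t) dμ(t)|² ≤ ∫_Ω |f(t) − (x' + x)/2|² dμ(t) = (1/4)|x' − x|² − ∫_Ω Re⟨x' − f(t), f(t) − x⟩ dμ(t) ≤ (1/4)|x' − x|². -/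
open MeasureTheory
open scoped RightActions

/-- The notion `CStarModule` of the older Mathlib (right Hilbert `A`-modules, with
`⟪x, y <• a⟫ = ⟪x, y⟫ * a`); Mathlib's `CStarModule` now describes left modules. -/
class CStarModuleRight (A : outParam <| Type*) (E : Type*) [NonUnitalSemiring A] [StarRing A]
    [Module ℂ A] [AddCommGroup E] [Module ℂ E] [PartialOrder A] [SMul Aᵐᵒᵖ E] [Norm A] [Norm E]
    extends Inner A E where
  inner_add_right {x} {y} {z} : inner x (y + z) = inner x y + inner x z
  inner_self_nonneg {x} : 0 ≤ inner x x
  inner_self {x} : inner x x = 0 ↔ x = 0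
  inner_op_smul_right {a : A} {x y : E} : inner x (y <• a) = inner x y * a
  inner_smul_right_complex {z : ℂ} {x} {y} : inner x (z • y) = z • inner x y
  star_inner x y : star (inner x y) = inner y x
  norm_eq_sqrt_norm_inner_self x : ‖x‖ = √‖inner x x‖

section AuxBasic

variable {A : Type*} [NonUnitalCStarAlgebra A] [PartialOrder A]
    {X : Type*} [NormedAddCommGroup X] [NormedSpace ℂ X] [SMul Aᵐᵒᵖ X] [CStarModuleRight A X]

private def gruss_innerAdd (x : X) : X →+ A :=
  AddMonoidHom.mk' (inner A x) (fun _ _ => CStarModuleRight.inner_add_right)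

private lemma gruss_inner_add_left {x y z : X} :
    (inner A (x + y) z : A) = inner A x z + inner A y z := by
  rw [← CStarModuleRight.star_inner, CStarModuleRight.inner_add_right, star_add,
    CStarModuleRight.star_inner, CStarModuleRight.star_inner]

private lemma gruss_inner_sub_right {x y z : X} :
    (inner A x (y - z) : A) = inner A x y - inner A x z :=
  map_sub (gruss_innerAdd (A := A) x) y z

private lemma gruss_inner_sub_left {x y z : X} :
    (inner A (x - y) z : A) = inner A x z - inner A y z := by
  rw [← CStarModuleRight.star_inner, gruss_inner_sub_right, star_sub,
    CStarModuleRight.star_inner, CStarModuleRight.star_inner]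

private lemma gruss_inner_zero_left {y : X} : (inner A (0 : X) y : A) = 0 := by
  have := gruss_inner_sub_left (A := A) (x := (0 : X)) (y := 0) (z := y)
  simpa using this

private lemma gruss_inner_smul_right_real {r : ℝ} {x y : X} :
    (inner A x (r • y) : A) = r • inner A x y := by
  rw [show r • y = (r : ℂ) • y by simp, CStarModuleRight.inner_smul_right_complex]
  simp

private lemma gruss_inner_smul_left_real {r : ℝ} {x y : X} :
    (inner A (r • x) y : A) = r • inner A x y := by
  rw [← CStarModuleRight.star_inner, gruss_inner_smul_right_real, star_smul,
    CStarModuleRight.star_inner, star_trivial]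

private lemma gruss_inner_op_smul_left {a : A} {x y : X} :
    (inner A (x <• a) y : A) = star a * inner A x y := by
  rw [← CStarModuleRight.star_inner, CStarModuleRight.inner_op_smul_right, star_mul,
    CStarModuleRight.star_inner]

end AuxBasic

section AuxNorm

variable {A : Type*} [NonUnitalCStarAlgebra A] [PartialOrder A] [StarOrderedRing A]
    {X : Type*} [NormedAddCommGroup X] [NormedSpace ℂ X] [SMul Aᵐᵒᵖ X] [CStarModuleRight A X]

private lemma gruss_norm_sq (x : X) : ‖x‖ ^ 2 = ‖(inner A x x : A)‖ := by
  rw [CStarModuleRight.norm_eq_sqrt_norm_inner_self (A := A) x, Real.sq_sqrt (norm_nonneg _)]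

private lemma gruss_norm_inner_le (x y : X) : ‖(inner A x y : A)‖ ≤ ‖x‖ * ‖y‖ := by
  rcases eq_or_ne x 0 with hx | hx
  · subst hx
    rw [gruss_inner_zero_left, norm_zero]
    positivity
  set n : ℝ := ‖x‖ ^ 2 with hn
  have hnpos : 0 < n := by have := norm_pos_iff.mpr hx; positivity
  set a : A := inner A x y with ha
  have hs : (inner A y x : A) = star a := (CStarModuleRight.star_inner x y).symm
  have h1 : (0 : A) ≤ star a * (inner A x x * a) - n • (star a * a) - n • (star a * a)
      + n • (n • (inner A y y : A)) := by
    have h0 := CStarModuleRight.inner_self_nonneg (A := A) (x := x <• a - n • y)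
    simp only [gruss_inner_sub_left, gruss_inner_sub_right, gruss_inner_op_smul_left,
      CStarModuleRight.inner_op_smul_right, gruss_inner_smul_left_real,
      gruss_inner_smul_right_real, hs, ← ha, mul_smul_comm, smul_mul_assoc,
      sub_mul, mul_sub, mul_assoc, smul_sub] at h0
    convert h0 using 1
    abel
  have h2 : star a * (inner A x x * a) ≤ n • (star a * a) := by
    rw [← mul_assoc, hn, gruss_norm_sq (A := A) x]
    exact CStarAlgebra.star_left_conjugate_le_norm_smul
      (CStarModuleRight.star_inner x x)
  have h3 : (0 : A) ≤ n • (n • (inner A y y : A)) - n • (star a * a) := by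
    calc (0 : A) ≤ star a * (inner A x x * a) - n • (star a * a) - n • (star a * a)
          + n • (n • (inner A y y : A)) := h1
      _ ≤ n • (star a * a) - n • (star a * a) - n • (star a * a)
          + n • (n • (inner A y y : A)) := by gcongr
      _ = n • (n • (inner A y y : A)) - n • (star a * a) := by abel
  have h4 : star a * a ≤ n • (inner A y y : A) :=
    (smul_le_smul_iff_of_pos_left hnpos).mp (sub_nonneg.mp h3)
  have h5 : ‖a‖ ^ 2 ≤ (‖x‖ * ‖y‖) ^ 2 := by
    calc ‖a‖ ^ 2 = ‖star a * a‖ := by rw [CStarRing.norm_star_mul_self, pow_two]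
      _ ≤ ‖n • (inner A y y : A)‖ :=
          CStarAlgebra.norm_le_norm_of_nonneg_of_le (star_mul_self_nonneg a) h4
      _ = n * ‖(inner A y y : A)‖ := by rw [norm_smul, Real.norm_of_nonneg hnpos.le]
      _ = (‖x‖ * ‖y‖) ^ 2 := by rw [← gruss_norm_sq (A := A) y, hn]; ring
  exact (pow_le_pow_iff_left₀ (norm_nonneg _) (by positivity) (by norm_num)).mp h5

private noncomputable def gruss_innerR (c : X) : X →L[ℝ] A :=
  LinearMap.mkContinuous
    { toFun := fun y => inner A c y
      map_add' := fun _ _ => CStarModuleRight.inner_add_right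
      map_smul' := fun _ _ => gruss_inner_smul_right_real }
    ‖c‖ (fun y => gruss_norm_inner_le c y)

private lemma gruss_innerR_apply (c y : X) : gruss_innerR (A := A) c y = inner A c y := rfl

private noncomputable def gruss_innerB : X →L[ℝ] X →L[ℝ] A :=
  LinearMap.mkContinuous₂
    (LinearMap.mk₂ ℝ (fun x y => (inner A x y : A))
      (fun _ _ _ => gruss_inner_add_left) (fun _ _ _ => gruss_inner_smul_left_real)
      (fun _ _ _ => CStarModuleRight.inner_add_right)
      (fun _ _ _ => gruss_inner_smul_right_real))
    1 (fun x y => by simpa using gruss_norm_inner_le (A := A) x y)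

private lemma gruss_continuous_inner :
    Continuous (fun p : X × X => (inner A p.1 p.2 : A)) :=
  (gruss_innerB (A := A) (X := X)).continuous₂

end AuxNorm

section Aux

variable {A : Type*} [NonUnitalCStarAlgebra A]
    [PartialOrder A] [StarOrderedRing A]
    {X : Type*} [NormedAddCommGroup X] [NormedSpace ℂ X] [SMul Aᵐᵒᵖ X] [CStarModuleRight A X]
    {Ω : Type*} [MeasurableSpace Ω] {μ : Measure Ω}

private lemma gruss_integrable_inner {g h : Ω → X} (hg : MemLp g 2 μ) (hh : MemLp h 2 μ) :
    Integrable (fun t => (inner A (g t) (h t) : A)) μ := by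
  have hm : AEStronglyMeasurable (fun t => (inner A (g t) (h t) : A)) μ :=
    gruss_continuous_inner.comp_aestronglyMeasurable
      (hg.aestronglyMeasurable.prodMk hh.aestronglyMeasurable)
  have hb : Integrable (fun t => ((‖g t‖ ^ 2 + ‖h t‖ ^ 2) / 2)) μ :=
    (hg.norm.integrable_sq.add hh.norm.integrable_sq).div_const 2
  refine hb.mono' hm (Filter.Eventually.of_forall fun t => ?_)
  have h1 := gruss_norm_inner_le (A := A) (g t) (h t)
  nlinarith [sq_nonneg (‖g t‖ - ‖h t‖), norm_nonneg (g t), norm_nonneg (h t)]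

private lemma gruss_keyA (x' x y : X) :
    (inner A (y - (2:ℝ)⁻¹ • (x' + x)) (y - (2:ℝ)⁻¹ • (x' + x)) : A) =
      (4:ℝ)⁻¹ • (inner A (x' - x) (x' - x) : A) -
        (2:ℝ)⁻¹ • ((inner A (x' - y) (y - x) : A) + star (inner A (x' - y) (y - x) : A)) := by
  simp only [gruss_inner_sub_left, gruss_inner_sub_right,
    gruss_inner_add_left, CStarModuleRight.inner_add_right,
    gruss_inner_smul_left_real, gruss_inner_smul_right_real, star_sub, star_add,
    CStarModuleRight.star_inner, smul_add, smul_sub, smul_smul]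
  module

omit [StarOrderedRing A] in
private lemma gruss_keyB (c y : X) :
    (inner A (y - c) (y - c) : A) =
      (inner A y y : A) - (inner A y c : A) - (inner A c y : A) + (inner A c c : A) := by
  simp only [gruss_inner_sub_left, gruss_inner_sub_right]
  abel

end Aux

/-- Under the condition `∫ Re⟨x' − f(t), f(t) − x⟩ dμ ≥ 0`, in the order of the C*-algebra `A`:
`∫ |f|² dμ − |∫ f dμ|² ≤ ∫ |f − (x'+x)/2|² dμ
  = (1/4)|x'−x|² − ∫ Re⟨x' − f(t), f(t) − x⟩ dμ ≤ (1/4)|x'−x|²`. -/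
theorem gruss_chain_cstarModule {A : Type*} [NonUnitalCStarAlgebra A]
    [PartialOrder A] [StarOrderedRing A]
    {X : Type*} [NormedAddCommGroup X] [NormedSpace ℂ X] [SMul Aᵐᵒᵖ X] [CStarModuleRight A X]
    [CompleteSpace X]
    {Ω : Type*} [MeasurableSpace Ω] (μ : Measure Ω) [IsProbabilityMeasure μ]
    (f : Ω → X) (hf : MemLp f 2 μ) (x x' : X)
    (h : 0 ≤ ∫ t, (2 : ℝ)⁻¹ • ((inner A (x' - f t) (f t - x) : A) +
          star (inner A (x' - f t) (f t - x) : A)) ∂μ) :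
    (∫ t, (inner A (f t) (f t) : A) ∂μ) - (inner A (∫ t, f t ∂μ) (∫ t, f t ∂μ) : A) ≤
        (∫ t, (inner A (f t - (2 : ℝ)⁻¹ • (x' + x)) (f t - (2 : ℝ)⁻¹ • (x' + x)) : A) ∂μ) ∧
      (∫ t, (inner A (f t - (2 : ℝ)⁻¹ • (x' + x)) (f t - (2 : ℝ)⁻¹ • (x' + x)) : A) ∂μ) =
        (4 : ℝ)⁻¹ • (inner A (x' - x) (x' - x) : A) -
          (∫ t, (2 : ℝ)⁻¹ • ((inner A (x' - f t) (f t - x) : A) +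
            star (inner A (x' - f t) (f t - x) : A)) ∂μ) ∧
      (4 : ℝ)⁻¹ • (inner A (x' - x) (x' - x) : A) -
          (∫ t, (2 : ℝ)⁻¹ • ((inner A (x' - f t) (f t - x) : A) +
            star (inner A (x' - f t) (f t - x) : A)) ∂μ) ≤
        (4 : ℝ)⁻¹ • (inner A (x' - x) (x' - x) : A) := by
  set c : X := (2 : ℝ)⁻¹ • (x' + x) with hc
  set K : A := (4 : ℝ)⁻¹ • (inner A (x' - x) (x' - x) : A) with hK
  set m : X := ∫ t, f t ∂μ with hm
  have hfi : Integrable f μ := hf.integrable (by norm_num)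
  have hfc : MemLp (fun t => f t - c) 2 μ := hf.sub (memLp_const c)
  have hI_g : Integrable (fun t => (inner A (f t - c) (f t - c) : A)) μ :=
    gruss_integrable_inner hfc hfc
  -- the "Re inner" function equals `K - g`
  have hfun : (fun t => (2 : ℝ)⁻¹ • ((inner A (x' - f t) (f t - x) : A) +
      star (inner A (x' - f t) (f t - x) : A))) =
      fun t => K - (inner A (f t - c) (f t - c) : A) := by
    funext t
    rw [gruss_keyA x' x (f t)]
    abel
  have hInt_h : (∫ t, (2 : ℝ)⁻¹ • ((inner A (x' - f t) (f t - x) : A) +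
      star (inner A (x' - f t) (f t - x) : A)) ∂μ) =
      K - ∫ t, (inner A (f t - c) (f t - c) : A) ∂μ := by
    rw [hfun, integral_sub (integrable_const K) hI_g, integral_const]
    simp
  refine ⟨?_, by rw [hInt_h]; abel, by rw [sub_le_self_iff]; exact h⟩
  -- first inequality
  have hIfc : Integrable (fun t => (inner A (f t) (c : X) : A)) μ :=
    gruss_integrable_inner hf (memLp_const c)
  have hIcf : Integrable (fun t => (inner A (c : X) (f t) : A)) μ :=
    gruss_integrable_inner (memLp_const c) hf
  have hIff : Integrable (fun t => (inner A (f t) (f t) : A)) μ :=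
    gruss_integrable_inner hf hf
  have hcf : (∫ t, (inner A (c : X) (f t) : A) ∂μ) = (inner A c m : A) := by
    have := (gruss_innerR (A := A) c).integral_comp_comm hfi
    simpa [gruss_innerR_apply] using this
  have hfcint : (∫ t, (inner A (f t) (c : X) : A) ∂μ) = (inner A m c : A) := by
    have := (((starL' ℝ : A ≃L[ℝ] A).toContinuousLinearMap.comp
      (gruss_innerR (A := A) c)).integral_comp_comm hfi)
    simpa [gruss_innerR_apply, CStarModuleRight.star_inner] using this
  have hexp : (∫ t, (inner A (f t - c) (f t - c) : A) ∂μ) =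
      (∫ t, (inner A (f t) (f t) : A) ∂μ) - (inner A m c : A) - (inner A c m : A)
        + (inner A c c : A) := by
    have : (fun t => (inner A (f t - c) (f t - c) : A)) =
        fun t => (inner A (f t) (f t) : A) - (inner A (f t) c : A) - (inner A c (f t) : A)
          + (inner A c c : A) := by
      funext t; exact gruss_keyB c (f t)
    have h1 : Integrable (fun t => (inner A (f t) (f t) : A) - (inner A (f t) c : A)) μ :=
      hIff.sub hIfc
    have h2 : Integrable
        (fun t => (inner A (f t) (f t) : A) - (inner A (f t) c : A) - (inner A c (f t) : A)) μ :=
      h1.sub hIcf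
    rw [this, integral_add h2 (integrable_const _), integral_sub h1 hIcf,
      integral_sub hIff hIfc, integral_const, hcf, hfcint]
    simp
  have hpos : (0 : A) ≤ (inner A (m - c) (m - c) : A) := CStarModuleRight.inner_self_nonneg
  rw [gruss_keyB c m] at hpos
  have : (∫ t, (inner A (f t - c) (f t - c) : A) ∂μ) -
      ((∫ t, (inner A (f t) (f t) : A) ∂μ) - (inner A m m : A)) =
      (inner A m m : A) - (inner A m c : A) - (inner A c m : A) + (inner A c c : A) := by
    rw [hexp]; abel
  exact sub_nonneg.mp (this ▸ hpos)
end

section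
/- Let Ω = [0,1] with Lebesgue measure and let f = g : [0,1] → ℂ be given by f(t) = −1 for 0 ≤ t ≤ 1/2 and f(t) = 1 for 1/2 < t ≤ 1, and set x' = y' = 1, x = y = −1. Then ∫₀¹ Re((x' − f(t))·conj(f(t) − x)) dt ≥ 0, and |∫₀¹ f(t)·conj(g(t)) dt − (∫₀¹ f(t) dt)·conj(∫₀¹ g(t) dt)| = 1 = (1/4)|x' − x||y' − y|; hence the constant 1/4 in the Grüss-type inequality for Hilbert C*-modules cannot be replaced by a smaller constant. -/
open MeasureTheory

/-- Sharpness example for the Grüss inequality: for the function `f = g` on `[0,1]` taking the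
value `-1` on `[0, 1/2]` and `1` on `(1/2, 1]`, with `x' = y' = 1` and `x = y = -1`, the
condition holds and the Grüss functional attains the value `1 = (1/4)|x' − x||y' − y|`. -/
theorem gruss_sharpness_example (f g : ℝ → ℂ)
    (hfg : g = f)
    (hf₁ : ∀ t : ℝ, 0 ≤ t → t ≤ 1 / 2 → f t = -1)
    (hf₂ : ∀ t : ℝ, 1 / 2 < t → t ≤ 1 → f t = 1) :
    (0 ≤ ∫ t in Set.Icc (0 : ℝ) 1, (((1 : ℂ) - f t) * (starRingEnd ℂ) (f t - (-1))).re) ∧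
      ‖(∫ t in Set.Icc (0 : ℝ) 1, f t * (starRingEnd ℂ) (g t)) -
          (∫ t in Set.Icc (0 : ℝ) 1, f t) * (starRingEnd ℂ) (∫ t in Set.Icc (0 : ℝ) 1, g t)‖ =
        1 ∧
      (1 : ℝ) = 4⁻¹ * ‖(1 : ℂ) - (-1)‖ * ‖(1 : ℂ) - (-1)‖ := by
  subst hfg
  have hcase : ∀ t ∈ Set.Icc (0 : ℝ) 1, g t = -1 ∨ g t = 1 := by
    rintro t ⟨h0, h1⟩
    rcases le_or_gt t (1 / 2) with h | h
    · exact Or.inl (hf₁ t h0 h)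
    · exact Or.inr (hf₂ t h h1)
  constructor
  · have h0 : ∫ t in Set.Icc (0 : ℝ) 1,
        (((1 : ℂ) - g t) * (starRingEnd ℂ) (g t - (-1))).re = 0 := by
      rw [setIntegral_congr_fun measurableSet_Icc
        (g := fun _ => (0 : ℝ)) ?_, integral_zero]
      intro t ht
      rcases hcase t ht with h | h <;> simp [h]
    rw [h0]
  constructor
  · have hA : (∫ t in Set.Icc (0 : ℝ) 1, g t * (starRingEnd ℂ) (g t)) = 1 := by
      rw [setIntegral_congr_fun measurableSet_Icc (g := fun _ => (1 : ℂ)) ?_]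
      · simp
      · intro t ht
        rcases hcase t ht with h | h <;> simp [h]
    have hsplit : Set.Icc (0 : ℝ) 1 = Set.Icc (0 : ℝ) (1 / 2) ∪ Set.Ioc (1 / 2) 1 := by
      rw [Set.Icc_union_Ioc_eq_Icc] <;> norm_num
    have hI1 : IntegrableOn g (Set.Icc (0 : ℝ) (1 / 2)) := by
      apply ((integrableOn_const_iff (C := (-1:ℂ))).2 (Or.inr (by simp))).congr_fun ?_ measurableSet_Icc
      intro t ht; exact (hf₁ t ht.1 ht.2).symm
    have hI2 : IntegrableOn g (Set.Ioc (1 / 2 : ℝ) 1) := by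
      apply ((integrableOn_const_iff (C := (1:ℂ))).2 (Or.inr (by simp))).congr_fun ?_ measurableSet_Ioc
      intro t ht; exact (hf₂ t ht.1 ht.2).symm
    have hB : (∫ t in Set.Icc (0 : ℝ) 1, g t) = 0 := by
      rw [hsplit, setIntegral_union (by rw [Set.disjoint_left]; rintro t ⟨_, h2⟩ ⟨h3, _⟩; linarith)
        measurableSet_Ioc hI1 hI2]
      have e1 : (∫ t in Set.Icc (0 : ℝ) (1 / 2), g t) = -(1 / 2 : ℂ) := by
        rw [setIntegral_congr_fun measurableSet_Icc (g := fun _ => (-1 : ℂ))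
          (fun t ht => hf₁ t ht.1 ht.2)]
        norm_num [Real.volume_Icc]
      have e2 : (∫ t in Set.Ioc (1 / 2 : ℝ) 1, g t) = (1 / 2 : ℂ) := by
        rw [setIntegral_congr_fun measurableSet_Ioc (g := fun _ => (1 : ℂ))
          (fun t ht => hf₂ t ht.1 ht.2)]
        norm_num [Real.volume_Ioc]
      rw [e1, e2]; ring
    rw [hA, hB]
    simp
  · have : ‖(1 : ℂ) - (-1)‖ = 2 := by norm_num
    rw [this]; norm_num
end
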